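/- Let r be a nonzero integer and s ∈ ℂ with Re(s) > 1. Then ∑_{c=1}^∞ C_c(r) / c^s = σ_{1−s}(r) / ζ(s), where the series on the left converges absolutely. -/

import Mathlib

open Complex Filter Topology

open ArithmeticFunction LSeries
open scoped LSeries.notation
open scoped ArithmeticFunction.Moebius ArithmeticFunction.zeta

noncomputable section

/-- The Ramanujan sum `C_c(r) = ∑_{1 ≤ a ≤ c, gcd(a,c)=1} e^{2πiar/c}`. -/
def ramanujanSum (c : ℕ) (r : ℤ) : ℂ :=
  ∑ a ∈ Finset.filter (fun a => Nat.Coprime a c) (Finset.Icc 1 c),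
    Complex.exp (2 * Real.pi * Complex.I * (a : ℂ) * (r : ℂ) / (c : ℂ))

/-- The divisor function `σ_w(r) = ∑_{d ∣ |r|, d > 0} d^w` for a nonzero integer `r`. -/
def sigmaDiv (w : ℂ) (r : ℤ) : ℂ :=
  ∑ d ∈ Nat.divisors r.natAbs, (d : ℂ) ^ w

lemma root_sum (c : ℕ) (hc : c ≠ 0) (k : ℤ) :
    ∑ a ∈ Finset.Icc 1 c, Complex.exp (2 * Real.pi * Complex.I * (a : ℂ) * (k : ℂ) / (c : ℂ))
      = if (c : ℤ) ∣ k then (c : ℂ) else 0 := by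
  have hc' : (c : ℂ) ≠ 0 := Nat.cast_ne_zero.mpr hc
  set z : ℂ := Complex.exp (2 * Real.pi * Complex.I * (k : ℂ) / (c : ℂ)) with hz
  have hterm : ∀ a : ℕ, Complex.exp (2 * Real.pi * Complex.I * (a : ℂ) * (k : ℂ) / (c : ℂ)) = z ^ a := by
    intro a
    rw [hz, ← Complex.exp_nat_mul]
    ring_nf
  have hzc : z ^ c = 1 := by
    rw [hz, ← Complex.exp_nat_mul]
    have : (c : ℂ) * (2 * Real.pi * Complex.I * (k : ℂ) / (c : ℂ)) = (k : ℂ) * (2 * Real.pi * Complex.I) := by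
      field_simp
    rw [this, Complex.exp_int_mul_two_pi_mul_I]
  simp_rw [hterm]
  by_cases hdvd : (c : ℤ) ∣ k
  · obtain ⟨m, rfl⟩ := hdvd
    have hz1 : z = 1 := by
      rw [hz]
      have : 2 * Real.pi * Complex.I * ((c * m : ℤ) : ℂ) / (c : ℂ) = (m : ℂ) * (2 * Real.pi * Complex.I) := by
        push_cast; field_simp
      rw [this, Complex.exp_int_mul_two_pi_mul_I]
    simp [hz1, Nat.card_Icc]
  · have hz1 : z ≠ 1 := by
      intro h
      apply hdvd
      rw [hz, Complex.exp_eq_one_iff] at h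
      obtain ⟨n, hn⟩ := h
      have hπ : (Real.pi : ℂ) ≠ 0 := ofReal_ne_zero.mpr Real.pi_ne_zero
      have hI : Complex.I ≠ 0 := Complex.I_ne_zero
      have h2 : (2 * (Real.pi:ℂ) * Complex.I) ≠ 0 := mul_ne_zero (mul_ne_zero two_ne_zero hπ) hI
      have : (k : ℂ) = (c : ℂ) * (n : ℂ) := by
        field_simp at hn
        exact hn
      exact ⟨n, by exact_mod_cast this⟩
    have hsum : ∑ a ∈ Finset.range (c + 1), z ^ a = 1 := by
      rw [geom_sum_eq hz1, pow_succ, hzc, one_mul]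
      exact div_self (sub_ne_zero.mpr hz1)
    have : Finset.range (c + 1) = insert 0 (Finset.Icc 1 c) := by
      ext a
      simp [Nat.lt_succ_iff, Nat.one_le_iff_ne_zero]
      omega
    rw [this, Finset.sum_insert (by simp)] at hsum
    simp only [pow_zero] at hsum
    rw [if_neg hdvd]
    linear_combination hsum


lemma moebius_indicator (n : ℕ) (hn : n ≠ 0) :
    (∑ d ∈ n.divisors, ((μ d : ℤ) : ℂ)) = if n = 1 then 1 else 0 := by
  have h := congrArg (fun f : ArithmeticFunction ℤ => f n) moebius_mul_coe_zeta
  simp only [ArithmeticFunction.mul_apply, ArithmeticFunction.one_apply, ArithmeticFunction.natCoe_apply] at h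
  rw [Nat.sum_divisorsAntidiagonal (f := fun d e => μ d * ζ e)] at h
  have h2 : ∀ d ∈ n.divisors, μ d * (ζ (n / d) : ℤ) = μ d := by
    intro d hd
    rw [Nat.mem_divisors] at hd
    have hd0 : d ≠ 0 := fun h0 => hn (by simpa [h0] using hd.1)
    have hne : n / d ≠ 0 := Nat.div_ne_zero_iff.mpr ⟨hd0, Nat.le_of_dvd (Nat.pos_of_ne_zero hn) hd.1⟩
    simp [ArithmeticFunction.zeta_apply, hne]
  rw [Finset.sum_congr rfl h2] at h
  have := congrArg (fun z : ℤ => (z : ℂ)) h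
  push_cast at this
  simpa using this


lemma ramanujanSum_eq (r : ℤ) (c : ℕ) (hc : c ≠ 0) :
    ramanujanSum c r
      = ∑ e ∈ c.divisors, (if (e : ℤ) ∣ r then (e : ℂ) else 0) * ((μ (c / e) : ℤ) : ℂ) := by
  have hc' : (c : ℂ) ≠ 0 := Nat.cast_ne_zero.mpr hc
  have step1 : ramanujanSum c r
      = ∑ a ∈ Finset.Icc 1 c, ∑ d ∈ (Nat.gcd a c).divisors,
          ((μ d : ℤ) : ℂ) * Complex.exp (2 * Real.pi * Complex.I * (a : ℂ) * (r : ℂ) / (c : ℂ)) := by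
    rw [ramanujanSum, Finset.sum_filter]
    refine Finset.sum_congr rfl fun a ha => ?_
    rw [← Finset.sum_mul, moebius_indicator _ (Nat.gcd_ne_zero_right hc)]
    by_cases h : Nat.Coprime a c
    · rw [if_pos h, if_pos h, one_mul]
    · rw [if_neg h, if_neg h, zero_mul]
  have step2 : ∀ a ∈ Finset.Icc 1 c, (Nat.gcd a c).divisors = c.divisors.filter (· ∣ a) := by
    intro a ha
    ext d
    simp only [Nat.mem_divisors, Finset.mem_filter, Nat.dvd_gcd_iff]
    constructor
    · rintro ⟨⟨h1, h2⟩, -⟩; exact ⟨⟨h2, hc⟩, h1⟩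
    · rintro ⟨⟨h2, -⟩, h1⟩; exact ⟨⟨h1, h2⟩, Nat.gcd_ne_zero_right hc⟩
  rw [step1, Finset.sum_congr rfl fun a ha => by rw [step2 a ha]]
  rw [Finset.sum_comm' (t' := c.divisors) (s' := fun d => (Finset.Icc 1 c).filter (d ∣ ·))
    (fun a d => by simp only [Finset.mem_filter]; tauto)]
  have inner : ∀ d ∈ c.divisors, (∑ a ∈ (Finset.Icc 1 c).filter (d ∣ ·),
        ((μ d : ℤ) : ℂ) * Complex.exp (2 * Real.pi * Complex.I * (a : ℂ) * (r : ℂ) / (c : ℂ)))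
      = ((μ d : ℤ) : ℂ) * (if ((c / d : ℕ) : ℤ) ∣ r then ((c / d : ℕ) : ℂ) else 0) := by
    intro d hd
    rw [Nat.mem_divisors] at hd
    have hd0 : d ≠ 0 := fun h0 => hc (by simpa [h0] using hd.1)
    have hd' : (d : ℂ) ≠ 0 := Nat.cast_ne_zero.mpr hd0
    have hcd0 : c / d ≠ 0 := Nat.div_ne_zero_iff.mpr ⟨hd0, Nat.le_of_dvd (Nat.pos_of_ne_zero hc) hd.1⟩
    have himg : (Finset.Icc 1 c).filter (d ∣ ·) = (Finset.Icc 1 (c / d)).image (d * ·) := by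
      ext a
      simp only [Finset.mem_filter, Finset.mem_Icc, Finset.mem_image]
      constructor
      · rintro ⟨⟨h1, h2⟩, b, rfl⟩
        have hb0 : b ≠ 0 := by rintro rfl; omega
        refine ⟨b, ⟨Nat.one_le_iff_ne_zero.mpr hb0,
          (Nat.le_div_iff_mul_le (Nat.pos_of_ne_zero hd0)).mpr (mul_comm b d ▸ h2)⟩, rfl⟩
      · rintro ⟨b, ⟨hb1, hb2⟩, rfl⟩
        refine ⟨⟨Nat.one_le_iff_ne_zero.mpr (mul_ne_zero hd0 (by omega)), ?_⟩, ⟨b, rfl⟩⟩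
        calc d * b ≤ d * (c / d) := Nat.mul_le_mul_left d hb2
        _ = c := Nat.mul_div_cancel' hd.1
    have hcast : ((c / d : ℕ) : ℂ) = (c : ℂ) / (d : ℂ) := Nat.cast_div hd.1 hd'
    have key : ∀ b : ℕ, Complex.exp (2 * Real.pi * Complex.I * ((d * b : ℕ) : ℂ) * (r : ℂ) / (c : ℂ))
        = Complex.exp (2 * Real.pi * Complex.I * (b : ℂ) * (r : ℂ) / ((c / d : ℕ) : ℂ)) := by
      intro b
      refine congrArg Complex.exp ?_
      rw [hcast]
      push_cast
      rw [div_eq_div_iff hc' (div_ne_zero hc' hd')]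
      field_simp
    rw [himg, Finset.sum_image (fun x _ y _ h =>
      Nat.eq_of_mul_eq_mul_left (Nat.pos_of_ne_zero hd0) h)]
    simp_rw [key]
    rw [← Finset.mul_sum, root_sum _ hcd0]
  rw [Finset.sum_congr rfl inner]
  rw [← Nat.sum_div_divisors (α := ℂ) c
    (fun e => (if (e : ℤ) ∣ r then (e : ℂ) else 0) * ((μ (c / e) : ℤ) : ℂ))]
  refine Finset.sum_congr rfl fun d hd => ?_
  rw [Nat.mem_divisors] at hd
  rw [Nat.div_div_self hd.1 hc, mul_comm]


/-- Dirichlet series of the Ramanujan sums: for `Re(s) > 1`,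
`∑_{c≥1} C_c(r)/c^s = σ_{1−s}(r)/ζ(s)`, the series converging absolutely. -/
theorem ramanujan_dirichlet_series (r : ℤ) (hr : r ≠ 0) (s : ℂ) (hs : 1 < s.re) :
    Summable (fun c : ℕ+ => ‖ramanujanSum (c : ℕ) r / ((c : ℕ) : ℂ) ^ s‖) ∧
    ∑' c : ℕ+, ramanujanSum (c : ℕ) r / ((c : ℕ) : ℂ) ^ s = sigmaDiv (1 - s) r / riemannZeta s := by
  have hrA : r.natAbs ≠ 0 := Int.natAbs_ne_zero.mpr hr
  set g : ℕ → ℂ := fun e => if (e : ℤ) ∣ r then (e : ℂ) else 0 with hg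
  have hdvd_iff : ∀ e : ℕ, ((e : ℤ) ∣ r) ↔ e ∣ r.natAbs := by
    intro e
    rw [← Int.dvd_natAbs, Int.natCast_dvd_natCast]
  -- norm bound
  set K : ℝ := ∑ e ∈ r.natAbs.divisors, (e : ℝ) with hK
  have hbound : ∀ c : ℕ, c ≠ 0 → ‖ramanujanSum c r‖ ≤ K := by
    intro c hc
    rw [ramanujanSum_eq r c hc]
    calc ‖∑ e ∈ c.divisors, g e * ((μ (c / e) : ℤ) : ℂ)‖
        ≤ ∑ e ∈ c.divisors, ‖g e * ((μ (c / e) : ℤ) : ℂ)‖ := norm_sum_le _ _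
      _ ≤ ∑ e ∈ c.divisors, (if e ∣ r.natAbs then (e : ℝ) else 0) := by
          refine Finset.sum_le_sum fun e he => ?_
          rw [norm_mul, hg]
          dsimp only
          by_cases h : (e : ℤ) ∣ r
          · rw [if_pos h, if_pos ((hdvd_iff e).mp h)]
            have h1 : ‖((μ (c / e) : ℤ) : ℂ)‖ ≤ 1 := by
              rw [Complex.norm_intCast]
              exact_mod_cast abs_moebius_le_one
            calc ‖(e:ℂ)‖ * ‖((μ (c / e) : ℤ) : ℂ)‖ ≤ ‖(e:ℂ)‖ * 1 :=
                  mul_le_mul_of_nonneg_left h1 (norm_nonneg _)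
              _ = (e : ℝ) := by rw [mul_one, Complex.norm_natCast]
          · rw [if_neg h, if_neg fun hh => h ((hdvd_iff e).mpr hh)]
            simp
      _ = ∑ e ∈ c.divisors.filter (· ∣ r.natAbs), (e : ℝ) := (Finset.sum_filter _ _).symm
      _ ≤ K := by
          refine Finset.sum_le_sum_of_subset_of_nonneg ?_ (by intros; positivity)
          intro e he
          rw [Finset.mem_filter, Nat.mem_divisors] at he
          exact Nat.mem_divisors.mpr ⟨he.2, hrA⟩
  have hnorm_cpow : ∀ c : ℕ, ‖((c : ℕ) : ℂ) ^ s‖ = (c : ℝ) ^ s.re := fun c =>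
    Complex.norm_natCast_cpow_of_re_ne_zero c (by linarith)
  have hsummable : Summable (fun c : ℕ+ => ‖ramanujanSum (c : ℕ) r / ((c : ℕ) : ℂ) ^ s‖) := by
    have hmaj : Summable (fun c : ℕ+ => K * (((c : ℕ) : ℝ) ^ s.re)⁻¹) := by
      exact ((Real.summable_nat_rpow_inv.mpr hs).mul_left K).comp_injective PNat.coe_injective
    refine Summable.of_nonneg_of_le (fun c => norm_nonneg _) (fun c => ?_) hmaj
    rw [norm_div, hnorm_cpow, div_eq_mul_inv]
    have h1 : (0:ℝ) ≤ (((c : ℕ) : ℝ) ^ s.re)⁻¹ := by positivity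
    exact mul_le_mul_of_nonneg_right (hbound c c.ne_zero) h1
  refine ⟨hsummable, ?_⟩
  -- identify with LSeries of convolution
  set F : ℕ → ℂ := g ⍟ ↗μ with hF
  have hFc : ∀ c : ℕ, c ≠ 0 → F c = ramanujanSum c r := by
    intro c hc
    rw [hF, LSeries.convolution_def, ramanujanSum_eq r c hc]
    exact Nat.sum_divisorsAntidiagonal (fun d e => g d * ((μ e : ℤ) : ℂ))
  have hterm : ∀ n : ℕ, term F s n = ramanujanSum n r / ((n : ℕ) : ℂ) ^ s := by
    intro n
    rcases eq_or_ne n 0 with rfl | hn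
    · rw [LSeries.term_zero]
      have : ramanujanSum 0 r = 0 := by simp [ramanujanSum]
      rw [this, zero_div]
    · rw [LSeries.term_of_ne_zero hn, hFc n hn]
  have htsum : ∑' c : ℕ+, ramanujanSum (c : ℕ) r / ((c : ℕ) : ℂ) ^ s = LSeries F s := by
    rw [LSeries]
    rw [← Function.Injective.tsum_eq (g := ((↑) : ℕ+ → ℕ)) PNat.coe_injective
      (f := fun n => term F s n) ?_]
    · exact tsum_congr fun c => (hterm c).symm
    · intro n hn
      rcases eq_or_ne n 0 with rfl | h0
      · simp [LSeries.term_zero] at hn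
      · exact ⟨⟨n, Nat.pos_of_ne_zero h0⟩, rfl⟩
  -- LSeries of g
  have hgsum : LSeriesSummable g s := by
    refine summable_of_ne_finset_zero (s := r.natAbs.divisors) fun n hn => ?_
    rcases eq_or_ne n 0 with rfl | h0
    · exact LSeries.term_zero _ _
    · rw [LSeries.term_of_ne_zero h0, hg]
      dsimp only
      have : ¬ (n : ℤ) ∣ r := fun h => hn (Nat.mem_divisors.mpr ⟨(hdvd_iff n).mp h, hrA⟩)
      rw [if_neg this, zero_div]
  have hgL : LSeries g s = sigmaDiv (1 - s) r := by
    rw [LSeries, tsum_eq_sum (s := r.natAbs.divisors) ?_]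
    · refine Finset.sum_congr rfl fun e he => ?_
      rw [Nat.mem_divisors] at he
      have he0 : e ≠ 0 := fun h => hrA (by simpa [h] using he.1)
      have he' : ((e : ℕ) : ℂ) ≠ 0 := Nat.cast_ne_zero.mpr he0
      rw [LSeries.term_of_ne_zero he0, hg]
      dsimp only
      rw [if_pos ((hdvd_iff e).mpr he.1)]
      rw [Complex.cpow_sub _ _ he', Complex.cpow_one]
    · intro n hn
      rcases eq_or_ne n 0 with rfl | h0
      · exact LSeries.term_zero _ _
      · rw [LSeries.term_of_ne_zero h0, hg]
        dsimp only
        have : ¬ (n : ℤ) ∣ r := fun h => hn (Nat.mem_divisors.mpr ⟨(hdvd_iff n).mp h, hrA⟩)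
        rw [if_neg this, zero_div]
  have hμsum : LSeriesSummable (↗μ) s := LSeriesSummable_moebius_iff.mpr hs
  have hμL : LSeries (↗μ) s = (riemannZeta s)⁻¹ := by
    have h1 := LSeries_zeta_mul_Lseries_moebius hs
    rw [LSeries_zeta_eq_riemannZeta hs] at h1
    exact (inv_eq_of_mul_eq_one_right h1).symm
  rw [htsum, hF, LSeries_convolution' hgsum hμsum, hgL, hμL, div_eq_mul_inv]
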